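/- If R = R¹ ∪ R² is a dominating set of πG with |R| = γ(G), and S¹ (resp. S²) denotes the set of vertices of G¹ (resp. G²) not dominated by R¹ (resp. R²) within their own copy, then S¹ and S² are 2-packings of G, each vertex of S¹ is matched under π to a vertex of R², and each vertex of S² is matched to a vertex of R¹; moreover no edge of G joins R¹ to S¹ or R² to S². -/
import Mathlib


open SimpleGraph

variable {V : Type*}

/-- `A` dominates `B`: every vertex of `B` is in the closed neighborhood of some vertex of `A`. -/
def Dominates (G : SimpleGraph V) (A B : Set V) : Prop :=
  ∀ b ∈ B, ∃ a ∈ A, a = b ∨ G.Adj a b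

/-- `D` is a dominating set of `G`. -/
def IsDomSet (G : SimpleGraph V) (D : Set V) : Prop :=
  Dominates G D Set.univ

/-- The domination number of `G`. -/
noncomputable def domNum (G : SimpleGraph V) : ℕ :=
  sInf {n | ∃ D : Set V, IsDomSet G D ∧ D.ncard = n}

/-- The prism of `G` with respect to a permutation `π`: two disjoint copies of `G`
joined by the perfect matching `u – π u`. -/
def prism (G : SimpleGraph V) (π : Equiv.Perm V) : SimpleGraph (V ⊕ V) :=
  SimpleGraph.fromRel (fun a b =>
    match a, b with
    | Sum.inl u, Sum.inl v => G.Adj u v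
    | Sum.inr u, Sum.inr v => G.Adj u v
    | Sum.inl u, Sum.inr v => v = π u
    | Sum.inr _, Sum.inl _ => False)

/-- `G` is a universal fixer. -/
def IsUniversalFixer (G : SimpleGraph V) : Prop :=
  ∀ π : Equiv.Perm V, domNum (prism G π) = domNum G

/-- `D` is a γ-set (minimum dominating set) of `G`. -/
def IsGammaSet (G : SimpleGraph V) (D : Set V) : Prop :=
  IsDomSet G D ∧ D.ncard = domNum G

/-- `D = [D₁, D₂]` is a symmetric γ-set of `G`. -/
def IsSymGammaSet (G : SimpleGraph V) (D D1 D2 : Set V) : Prop :=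
  IsGammaSet G D ∧ D = D1 ∪ D2 ∧ Disjoint D1 D2 ∧ D1.Nonempty ∧ D2.Nonempty ∧
    Dominates G D1 (Set.univ \ D2) ∧ Dominates G D2 (Set.univ \ D1)

/-- `S` is a 2-packing: closed neighborhoods of distinct vertices of `S` are disjoint. -/
def IsTwoPacking (G : SimpleGraph V) (S : Set V) : Prop :=
  ∀ x ∈ S, ∀ y ∈ S, x ≠ y →
    Disjoint (insert x (G.neighborSet x)) (insert y (G.neighborSet y))

/-- `D` is an even symmetric γ-set of `G`. -/
def IsEvenSymGammaSet (G : SimpleGraph V) (D : Set V) : Prop :=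
  ∃ D1 D2, IsSymGammaSet G D D1 D2 ∧ D1.ncard = D2.ncard

lemma domNum_le_ncard (G : SimpleGraph V) {D : Set V} (h : IsDomSet G D) :
    domNum G ≤ D.ncard :=
  Nat.sInf_le ⟨D, h, rfl⟩

lemma pack_aux [Fintype V] (G : SimpleGraph V) (R0 S : Set V)
    (hS : ∀ v, v ∉ S → ∃ a ∈ R0, a = v ∨ G.Adj a v)
    (hcard : R0.ncard + S.ncard ≤ domNum G) :
    IsTwoPacking G S := by
  intro x hx y hy hxy
  by_contra hnd
  rw [Set.not_disjoint_iff] at hnd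
  obtain ⟨z, hzx, hzy⟩ := hnd
  have hzx' : z = x ∨ G.Adj z x := by
    rcases hzx with h | h
    · exact Or.inl h
    · exact Or.inr (G.adj_symm h)
  have hzy' : z = y ∨ G.Adj z y := by
    rcases hzy with h | h
    · exact Or.inl h
    · exact Or.inr (G.adj_symm h)
  set D : Set V := (R0 ∪ (S \ {x, y})) ∪ {z} with hD
  have hdomD : IsDomSet G D := by
    intro b _
    by_cases hb : b ∈ S
    · by_cases hbx : b = x
      · exact ⟨z, Or.inr rfl, by subst hbx; exact hzx'⟩
      · by_cases hby : b = y
        · exact ⟨z, Or.inr rfl, by subst hby; exact hzy'⟩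
        · exact ⟨b, Or.inl (Or.inr ⟨hb, by simp [hbx, hby]⟩), Or.inl rfl⟩
    · obtain ⟨a, ha, h⟩ := hS b hb
      exact ⟨a, Or.inl (Or.inl ha), h⟩
  have hsub : ({x, y} : Set V) ⊆ S := by
    intro v hv; rcases hv with h | h
    · subst h; exact hx
    · simp only [Set.mem_singleton_iff] at h; subst h; exact hy
  have h2 : ({x, y} : Set V).ncard = 2 := Set.ncard_pair hxy
  have hS2 : 2 ≤ S.ncard := by
    have := Set.ncard_le_ncard hsub (Set.toFinite S)
    omega
  have hdiff : (S \ {x, y}).ncard = S.ncard - 2 := by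
    rw [Set.ncard_diff hsub (Set.toFinite _), h2]
  have hle : D.ncard ≤ R0.ncard + (S.ncard - 2) + 1 := by
    calc D.ncard ≤ (R0 ∪ (S \ {x, y})).ncard + ({z} : Set V).ncard :=
          Set.ncard_union_le _ _
      _ ≤ (R0.ncard + (S \ {x, y}).ncard) + 1 := by
          have := Set.ncard_union_le R0 (S \ {x, y})
          simp only [Set.ncard_singleton]
          omega
      _ = R0.ncard + (S.ncard - 2) + 1 := by rw [hdiff]
  have := domNum_le_ncard G hdomD
  omega

theorem stmt_19 [Fintype V] (G : SimpleGraph V) (π : Equiv.Perm V)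
    (R : Set (V ⊕ V)) (hdom : IsDomSet (prism G π) R)
    (hcard : R.ncard = domNum G)
    (R1 R2 S1 S2 : Set V)
    (hR1 : R1 = {v | Sum.inl v ∈ R}) (hR2 : R2 = {v | Sum.inr v ∈ R})
    (hS1 : S1 = {v | ¬ ∃ d ∈ R1, d = v ∨ G.Adj d v})
    (hS2 : S2 = {v | ¬ ∃ d ∈ R2, d = v ∨ G.Adj d v}) :
    IsTwoPacking G S1 ∧ IsTwoPacking G S2 ∧
    (∀ v ∈ S1, π v ∈ R2) ∧ (∀ v ∈ S2, π.symm v ∈ R1) ∧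
    (∀ u ∈ R1, ∀ v ∈ S1, ¬ G.Adj u v) ∧
    (∀ u ∈ R2, ∀ v ∈ S2, ¬ G.Adj u v) := by
  subst hR1 hR2 hS1 hS2
  -- matched vertices
  have hmatch1 : ∀ v ∈ {v | ¬ ∃ d ∈ {v | Sum.inl v ∈ R}, d = v ∨ G.Adj d v},
      π v ∈ {v | Sum.inr v ∈ R} := by
    intro v hv
    obtain ⟨a, ha, hadj⟩ := hdom (Sum.inl v) trivial
    cases a with
    | inl u =>
      exfalso
      apply hv
      refine ⟨u, ha, ?_⟩
      rcases hadj with h | h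
      · exact Or.inl (Sum.inl.inj h)
      · simp only [prism, SimpleGraph.fromRel_adj] at h
        rcases h.2 with h' | h'
        · exact Or.inr h'
        · exact Or.inr (G.adj_symm h')
    | inr u =>
      rcases hadj with h | h
      · exact absurd h (by simp)
      · simp only [prism, SimpleGraph.fromRel_adj] at h
        rcases h.2 with h' | h'
        · exact absurd h' (by simp)
        · subst h'; exact ha
  have hmatch2 : ∀ v ∈ {v | ¬ ∃ d ∈ {v | Sum.inr v ∈ R}, d = v ∨ G.Adj d v},
      π.symm v ∈ {v | Sum.inl v ∈ R} := by
    intro v hv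
    obtain ⟨a, ha, hadj⟩ := hdom (Sum.inr v) trivial
    cases a with
    | inr u =>
      exfalso
      apply hv
      refine ⟨u, ha, ?_⟩
      rcases hadj with h | h
      · exact Or.inl (Sum.inr.inj h)
      · simp only [prism, SimpleGraph.fromRel_adj] at h
        rcases h.2 with h' | h'
        · exact Or.inr h'
        · exact Or.inr (G.adj_symm h')
    | inl u =>
      rcases hadj with h | h
      · exact absurd h (by simp)
      · simp only [prism, SimpleGraph.fromRel_adj] at h
        rcases h.2 with h' | h'
        · have : u = π.symm v := by rw [h']; simp
          rw [← this]; exact ha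
        · exact absurd h' (by simp)
  -- cardinality decomposition
  set R1 := {v | Sum.inl v ∈ R} with hR1d
  set R2 := {v | Sum.inr v ∈ R} with hR2d
  set S1 := {v | ¬ ∃ d ∈ R1, d = v ∨ G.Adj d v} with hS1d
  set S2 := {v | ¬ ∃ d ∈ R2, d = v ∨ G.Adj d v} with hS2d
  have hReq : R = Sum.inl '' R1 ∪ Sum.inr '' R2 := by
    ext a
    cases a <;> simp [hR1d, hR2d]
  have hRcard : R.ncard = R1.ncard + R2.ncard := by
    rw [hReq, Set.ncard_union_eq (by
        rw [Set.disjoint_left]; rintro a ⟨u, _, rfl⟩ ⟨w, _, h⟩; exact Sum.inl_ne_inr h.symm)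
      (Set.toFinite _) (Set.toFinite _),
      Set.ncard_image_of_injective _ Sum.inl_injective,
      Set.ncard_image_of_injective _ Sum.inr_injective]
  have hS1card : S1.ncard ≤ R2.ncard := by
    have hsub : (π : V → V) '' S1 ⊆ R2 := by
      rintro _ ⟨v, hv, rfl⟩; exact hmatch1 v hv
    calc S1.ncard = ((π : V → V) '' S1).ncard :=
          (Set.ncard_image_of_injective _ π.injective).symm
      _ ≤ R2.ncard := Set.ncard_le_ncard hsub (Set.toFinite _)
  have hS2card : S2.ncard ≤ R1.ncard := by
    have hsub : (π.symm : V → V) '' S2 ⊆ R1 := by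
      rintro _ ⟨v, hv, rfl⟩; exact hmatch2 v hv
    calc S2.ncard = ((π.symm : V → V) '' S2).ncard :=
          (Set.ncard_image_of_injective _ π.symm.injective).symm
      _ ≤ R1.ncard := Set.ncard_le_ncard hsub (Set.toFinite _)
  have hdn : R1.ncard + R2.ncard = domNum G := by rw [← hRcard]; exact hcard
  refine ⟨?_, ?_, hmatch1, hmatch2, ?_, ?_⟩
  · refine pack_aux G R1 S1 ?_ (by omega)
    intro v hv
    simp only [hS1d, Set.mem_setOf_eq, not_not] at hv
    exact hv
  · refine pack_aux G R2 S2 ?_ (by omega)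
    intro v hv
    simp only [hS2d, Set.mem_setOf_eq, not_not] at hv
    exact hv
  · intro u hu v hv hadj
    exact hv ⟨u, hu, Or.inr hadj⟩
  · intro u hu v hv hadj
    exact hv ⟨u, hu, Or.inr hadj⟩
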